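/- Let g > 0, k > 0, η = 7/3, Δx > 0, h_L > 0, h_R > 0 with h_L ≠ h_R, and q_0 ≠ 0 with μ = sgn(q_0). Assume the discrete algebraic friction steady relation −(q_0²/(η−1))(h_R^{η−1} − h_L^{η−1}) + (g/(η+2))(h_R^{η+2} − h_L^{η+2}) = −k q_0 |q_0| Δx. Define H := ((h_R² − h_L²)/2)·(η+2)/(h_R^{η+2} − h_L^{η+2}) − (μ/(k Δx))·( (1/h_R − 1/h_L) + ((h_R² − h_L²)/2)·((h_R^{η−1} − h_L^{η−1})/(η−1))·((η+2)/(h_R^{η+2} − h_L^{η+2})) ). Then q_0²(1/h_R − 1/h_L) + (g/2)(h_R² − h_L²) + k q_0 |q_0| H Δx = 0, i.e. the discrete steady relation with friction holds with the average h̄^{−η} = H. -/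

import Mathlib

/-- The average `H` of `h^{−η}` obtained by eliminating `q₀²` through the
discrete algebraic friction relation satisfies the discrete steady relation
with friction: `q₀²[1/h] + (g/2)[h²] + k q₀|q₀| H Δx = 0`. Here `η = 7/3`
and `μ = sgn(q₀)`. -/
theorem friction_average_steady_relation (g k Δx hL hR q₀ η μ H : ℝ)
    (hg : 0 < g) (hk : 0 < k) (hΔx : 0 < Δx)
    (hhL : 0 < hL) (hhR : 0 < hR) (hne : hL ≠ hR) (hq₀ : q₀ ≠ 0)
    (hη : η = 7 / 3) (hμ : μ = Real.sign q₀)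
    (hH : H =
      (hR ^ 2 - hL ^ 2) / 2 * ((η + 2) / (hR ^ (η + 2) - hL ^ (η + 2))) -
        μ / (k * Δx) *
          ((1 / hR - 1 / hL) +
            (hR ^ 2 - hL ^ 2) / 2 * ((hR ^ (η - 1) - hL ^ (η - 1)) / (η - 1)) *
              ((η + 2) / (hR ^ (η + 2) - hL ^ (η + 2)))))
    (hsteady : -(q₀ ^ 2 / (η - 1)) * (hR ^ (η - 1) - hL ^ (η - 1)) +
      g / (η + 2) * (hR ^ (η + 2) - hL ^ (η + 2)) = -k * q₀ * |q₀| * Δx) :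
    q₀ ^ 2 * (1 / hR - 1 / hL) + g / 2 * (hR ^ 2 - hL ^ 2) +
      k * q₀ * |q₀| * H * Δx = 0 := by
  have habs : μ * |q₀| = q₀ := by
    rw [hμ]
    rcases hq₀.lt_or_gt with h | h
    · rw [Real.sign_of_neg h, abs_of_neg h]; ring
    · rw [Real.sign_of_pos h, abs_of_pos h]; ring
  have hD : hR ^ (η + 2) - hL ^ (η + 2) ≠ 0 := by
    have hz : (0:ℝ) < η + 2 := by rw [hη]; norm_num
    rcases lt_trichotomy hL hR with h | h | h
    · have := Real.rpow_lt_rpow hhL.le h hz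
      intro hc; nlinarith
    · exact absurd h hne
    · have := Real.rpow_lt_rpow hhR.le h hz
      intro hc; nlinarith
  set A := hR ^ (η - 1) - hL ^ (η - 1) with hA
  set D := hR ^ (η + 2) - hL ^ (η + 2) with hDdef
  have hη1 : η - 1 ≠ 0 := by rw [hη]; norm_num
  have hη2 : η + 2 ≠ 0 := by rw [hη]; norm_num
  have hkq : k * q₀ * |q₀| * Δx = q₀ ^ 2 / (η - 1) * A - g / (η + 2) * D := by
    linear_combination hsteady
  have hcan : k * q₀ * |q₀| * Δx * (μ / (k * Δx)) = q₀ ^ 2 := by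
    field_simp
    linear_combination habs
  have hexp : k * q₀ * |q₀| * H * Δx =
      (k * q₀ * |q₀| * Δx) * ((hR ^ 2 - hL ^ 2) / 2 * ((η + 2) / D)) -
        (k * q₀ * |q₀| * Δx * (μ / (k * Δx))) *
          ((1 / hR - 1 / hL) + (hR ^ 2 - hL ^ 2) / 2 * (A / (η - 1)) * ((η + 2) / D)) := by
    rw [hH]; ring
  rw [hexp, hcan, hkq]
  field_simp
  ring
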